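/- Let n be a finite index type, Q : Matrix n n ℝ a positive semidefinite matrix, μ : n → ℝ, and β > 0. Suppose there exists v₀ with Q *ᵥ v₀ = (1/(2·β)) • μ (so a maximizer of the soft objective exists), and suppose the kernel of Q is nontrivial, i.e., there exists z ≠ 0 with Q *ᵥ z = 0. Then the set of global maximizers of x ↦ μ ⬝ᵥ x − β·(x ⬝ᵥ (Q *ᵥ x)) over n → ℝ is infinite. -/

import Mathlib

open Matrix

/-- If a maximizer of the soft EvA-RL objective exists and `Q` has a
nontrivial kernel, then the set of global maximizers is infinite. -/
theorem soft_maximizers_infinite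
    {n : Type*} [Fintype n]
    (Q : Matrix n n ℝ) (hQ : Q.PosSemidef) (μ : n → ℝ) (β : ℝ) (hβ : 0 < β)
    (v₀ : n → ℝ) (hv₀ : Q *ᵥ v₀ = (1 / (2 * β)) • μ)
    (z : n → ℝ) (hz : z ≠ 0) (hQz : Q *ᵥ z = 0) :
    {x : n → ℝ | ∀ y : n → ℝ,
        μ ⬝ᵥ y - β * (y ⬝ᵥ (Q *ᵥ y)) ≤ μ ⬝ᵥ x - β * (x ⬝ᵥ (Q *ᵥ x))}.Infinite := by
  have hsym : Qᵀ = Q := (by simpa using hQ.1 : Q.IsSymm).eq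
  have hsw : ∀ a b : n → ℝ, a ⬝ᵥ (Q *ᵥ b) = b ⬝ᵥ (Q *ᵥ a) := by
    intro a b
    rw [dotProduct_mulVec, ← mulVec_transpose, hsym, dotProduct_comm]
  have hμ : μ = (2 * β) • (Q *ᵥ v₀) := by
    rw [hv₀, smul_smul]
    field_simp
    rw [one_smul]
  have hμd : ∀ x : n → ℝ, μ ⬝ᵥ x = 2 * β * (v₀ ⬝ᵥ (Q *ᵥ x)) := by
    intro x
    rw [hμ, smul_dotProduct, smul_eq_mul, dotProduct_comm, hsw x v₀]
  have hmax : ∀ y : n → ℝ, μ ⬝ᵥ y - β * (y ⬝ᵥ (Q *ᵥ y)) ≤ μ ⬝ᵥ v₀ - β * (v₀ ⬝ᵥ (Q *ᵥ v₀)) := by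
    intro y
    have hpos : 0 ≤ (y - v₀) ⬝ᵥ (Q *ᵥ (y - v₀)) := hQ.dotProduct_mulVec_nonneg (y - v₀)
    have hexp : (y - v₀) ⬝ᵥ (Q *ᵥ (y - v₀))
        = y ⬝ᵥ (Q *ᵥ y) - 2 * (v₀ ⬝ᵥ (Q *ᵥ y)) + v₀ ⬝ᵥ (Q *ᵥ v₀) := by
      rw [mulVec_sub, dotProduct_sub, sub_dotProduct, sub_dotProduct, hsw y v₀]
      ring
    rw [hμd y, hμd v₀]
    nlinarith [hpos]
  have hline : ∀ t : ℝ, (v₀ + t • z) ∈ {x : n → ℝ | ∀ y : n → ℝ,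
      μ ⬝ᵥ y - β * (y ⬝ᵥ (Q *ᵥ y)) ≤ μ ⬝ᵥ x - β * (x ⬝ᵥ (Q *ᵥ x))} := by
    intro t y
    have h1 : Q *ᵥ (v₀ + t • z) = Q *ᵥ v₀ := by
      rw [mulVec_add, mulVec_smul, hQz, smul_zero, add_zero]
    have h2 : (v₀ + t • z) ⬝ᵥ (Q *ᵥ (v₀ + t • z)) = v₀ ⬝ᵥ (Q *ᵥ v₀) := by
      rw [h1, add_dotProduct, smul_dotProduct, hsw z v₀, hQz, dotProduct_zero,
        smul_zero, add_zero]
    have h3 : μ ⬝ᵥ (v₀ + t • z) = μ ⬝ᵥ v₀ := by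
      rw [hμd, hμd, h1]
    rw [h2, h3]
    exact hmax y
  have hinj : Function.Injective (fun t : ℝ => v₀ + t • z) := by
    intro a b hab
    have : a • z = b • z := by
      simpa using hab
    exact smul_left_injective ℝ hz this
  exact Set.infinite_of_injective_forall_mem hinj hline
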